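/- Greedy peeling is a 1/2-approximation for maximizing generalized density. Let f be a generalized degree function on a finite type V, and let S* be a nonempty finset maximizing the generalized density ρ over all nonempty finsets, with f having bounded removal loss at S*. Let T : ℕ → Finset V and v : ℕ → V satisfy: T 0 = Finset.univ, and for every i with T i nonempty, v i ∈ T i, f (T i) (v i) ≤ f (T i) u for all u ∈ T i, and T (i+1) = (T i).erase (v i). Then there exists an index i such that T i is nonempty and 2 * ρ(T i) ≥ ρ(S*). -/

import Mathlib

/-- Greedy peeling is a 1/2-approximation for maximizing the generalized
density: along the peeling sequence `T 0 = univ`, `T (i+1) = (T i).erase (v i)`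
where `v i` minimizes the generalized degree in `T i`, some nonempty `T i`
has density at least half the optimum. -/
theorem greedy_peeling_half_approximation
    {V : Type*} [Fintype V] [DecidableEq V]
    (f : Finset V → V → ℝ)
    (hnonneg : ∀ (S : Finset V) (v : V), 0 ≤ f S v)
    (hmono : ∀ (S T : Finset V), S ⊆ T → ∀ v : V, f S v ≤ f T v)
    (Sstar : Finset V) (hne : Sstar.Nonempty)
    (hloss : ∀ v ∈ Sstar,
      (∑ u ∈ Sstar, f Sstar u) - (∑ u ∈ Sstar.erase v, f (Sstar.erase v) u)
        ≤ 2 * f Sstar v)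
    (hopt : ∀ S : Finset V, S.Nonempty →
      (∑ v ∈ S, f S v) / (2 * S.card) ≤ (∑ v ∈ Sstar, f Sstar v) / (2 * Sstar.card))
    (T : ℕ → Finset V) (v : ℕ → V)
    (hT0 : T 0 = Finset.univ)
    (hstep : ∀ i : ℕ, (T i).Nonempty →
      v i ∈ T i ∧ (∀ u ∈ T i, f (T i) (v i) ≤ f (T i) u) ∧
      T (i + 1) = (T i).erase (v i)) :
    ∃ i : ℕ, (T i).Nonempty ∧
      2 * ((∑ u ∈ T i, f (T i) u) / (2 * (T i).card))
        ≥ (∑ u ∈ Sstar, f Sstar u) / (2 * Sstar.card) := by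
  classical
  set ρ : ℝ := (∑ u ∈ Sstar, f Sstar u) / (2 * Sstar.card) with hρ
  have hkpos : (0:ℝ) < Sstar.card := by
    exact_mod_cast Finset.card_pos.mpr hne
  have hSumnn : (0:ℝ) ≤ ∑ u ∈ Sstar, f Sstar u :=
    Finset.sum_nonneg fun u _ => hnonneg _ _
  have hρ0 : 0 ≤ ρ := div_nonneg hSumnn (by positivity)
  have hSum : ∑ u ∈ Sstar, f Sstar u = ρ * (2 * Sstar.card) := by
    rw [hρ, div_mul_cancel₀]
    positivity
  -- key: every vertex of Sstar has degree at least ρ in Sstar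
  have hkey : ∀ w ∈ Sstar, ρ ≤ f Sstar w := by
    intro w hw
    have hcard_erase : ((Sstar.erase w).card : ℝ) = (Sstar.card : ℝ) - 1 := by
      rw [Finset.card_erase_of_mem hw]
      have : 1 ≤ Sstar.card := Finset.card_pos.mpr hne
      push_cast [Nat.cast_sub this]
      ring
    have herase : ∑ u ∈ Sstar.erase w, f (Sstar.erase w) u
        ≤ ρ * (2 * ((Sstar.card : ℝ) - 1)) := by
      rcases (Sstar.erase w).eq_empty_or_nonempty with he | hne'
      · rw [he, Finset.sum_empty]
        have h1 : (Sstar.card : ℝ) - 1 ≥ 0 := by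
          have : 1 ≤ Sstar.card := Finset.card_pos.mpr hne
          have : (1:ℝ) ≤ Sstar.card := by exact_mod_cast this
          linarith
        exact mul_nonneg hρ0 (by linarith)
      · have := hopt (Sstar.erase w) hne'
        have hcpos : (0:ℝ) < 2 * ((Sstar.erase w).card : ℝ) := by
          have := Finset.card_pos.mpr hne'
          have : (0:ℝ) < ((Sstar.erase w).card : ℝ) := by exact_mod_cast this
          linarith
        rw [div_le_iff₀ hcpos] at this
        calc ∑ u ∈ Sstar.erase w, f (Sstar.erase w) u
            ≤ ρ * (2 * ((Sstar.erase w).card : ℝ)) := by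
              rw [hρ]; linarith [this]
          _ = ρ * (2 * ((Sstar.card : ℝ) - 1)) := by rw [hcard_erase]
    have hl := hloss w hw
    nlinarith [hl, herase, hSum]
  -- termination: eventually Sstar is not contained in T n
  have hterm : ∃ n, ¬ Sstar ⊆ T n := by
    by_contra h
    push_neg at h
    have hcard : ∀ n, (T n).card + n ≤ Fintype.card V := by
      intro n
      induction n with
      | zero => simp [hT0]
      | succ n ih =>
        have hne' : (T n).Nonempty := hne.mono (h n)
        obtain ⟨hv, _, heq⟩ := hstep n hne'
        have hlt : (T (n+1)).card < (T n).card := by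
          rw [heq]; exact Finset.card_erase_lt_of_mem hv
        omega
    have h1 : 1 ≤ (T (Fintype.card V + 1)).card :=
      Finset.card_pos.mpr (hne.mono (h _))
    have := hcard (Fintype.card V + 1)
    omega
  have hnspec : ¬ Sstar ⊆ T (Nat.find hterm) := Nat.find_spec hterm
  have hn0 : Nat.find hterm ≠ 0 := by
    intro h0
    apply hnspec
    rw [h0, hT0]
    exact Finset.subset_univ _
  obtain ⟨i, hni⟩ : ∃ i, Nat.find hterm = i + 1 := ⟨Nat.find hterm - 1, by omega⟩
  rw [hni] at hnspec
  have hSsub : Sstar ⊆ T i := by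
    by_contra hc
    exact (Nat.find_min hterm (by omega : i < Nat.find hterm)) hc
  have hTne : (T i).Nonempty := hne.mono hSsub
  obtain ⟨hvmem, hmin, heq⟩ := hstep i hTne
  have hvS : v i ∈ Sstar := by
    by_contra hvn
    apply hnspec
    rw [heq]
    intro x hx
    exact Finset.mem_erase.mpr ⟨fun hxv => hvn (hxv ▸ hx), hSsub hx⟩
  refine ⟨i, hTne, ?_⟩
  have h1 : ρ ≤ f (T i) (v i) :=
    le_trans (hkey _ hvS) (hmono Sstar (T i) hSsub _)
  have h2 : (T i).card • ρ ≤ ∑ u ∈ T i, f (T i) u :=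
    Finset.card_nsmul_le_sum (T i) (f (T i)) ρ (fun x hx => le_trans h1 (hmin x hx))
  rw [nsmul_eq_mul] at h2
  have hcpos : (0:ℝ) < ((T i).card : ℝ) := by
    exact_mod_cast Finset.card_pos.mpr hTne
  rw [ge_iff_le]
  have : 2 * ((∑ u ∈ T i, f (T i) u) / (2 * ((T i).card : ℝ)))
      = (∑ u ∈ T i, f (T i) u) / ((T i).card : ℝ) := by
    rw [mul_div_assoc', mul_div_mul_left _ _ (two_ne_zero)]
  rw [this, le_div_iff₀ hcpos]
  linarith
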